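/- For α ∈ (0,1) and real 2×2 symmetric positive-definite matrices θ, θ′, the α-Bhattacharyya divergence between the Poincaré distributions p_θ and p_{θ′} has the closed form −log ∫_H p_θ(x,y)^α p_{θ′}(x,y)^{1−α} dx dy = (1/2)·log( det(αθ+(1−α)θ′) / ((det θ)^α (det θ′)^{1−α}) ) + 2( √(det(αθ+(1−α)θ′)) − (α√(det θ) + (1−α)√(det θ′)) ). -/

import Mathlib

open MeasureTheory Matrix

/-- The Poincaré density on the upper half-plane, as a density on `ℝ × ℝ`
(vanishing for `y ≤ 0`), indexed by a 2×2 symmetric positive-definite matrix. -/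
noncomputable def poincareDensity (θ : Matrix (Fin 2) (Fin 2) ℝ) (z : ℝ × ℝ) : ℝ :=
  if 0 < z.2 then
    Real.sqrt θ.det * Real.exp (2 * Real.sqrt θ.det) / Real.pi *
      Real.exp (-(θ 0 0 * (z.1 ^ 2 + z.2 ^ 2) + 2 * θ 0 1 * z.1 + θ 1 1) / z.2) / z.2 ^ 2
  else 0

section Aux
open Real Set

lemma aux32 {s : ℝ} (hs : 0 < s) : s * Real.sqrt s * Real.exp (-s) ≤ 3 := by
  have h2 : s * Real.sqrt s ≤ s + s^2 := by
    nlinarith [Real.sq_sqrt hs.le, Real.sqrt_nonneg s]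
  have h3 : s + s^2/2 ≤ Real.exp s := by
    have := Real.sum_le_exp_of_nonneg hs.le 3
    simp [Finset.sum_range_succ] at this
    nlinarith [this]
  have he : 0 < Real.exp s := Real.exp_pos s
  rw [Real.exp_neg, mul_inv_le_iff₀ he]
  nlinarith [Real.add_one_le_exp s]

lemma aux12 {s : ℝ} (hs : 0 < s) : Real.sqrt s * Real.exp (-s) ≤ 2 := by
  have h1 : Real.sqrt s ≤ 1 + s := by
    nlinarith [Real.sq_sqrt hs.le, Real.sqrt_nonneg s]
  have he : 0 < Real.exp s := Real.exp_pos s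
  rw [Real.exp_neg, mul_inv_le_iff₀ he]
  nlinarith [Real.add_one_le_exp s]

lemma sqrt_mul_pos {y : ℝ} (hy : 0 < y) : 0 < y * Real.sqrt y :=
  mul_pos hy (Real.sqrt_pos.2 hy)

lemma bound32 {p q y : ℝ} (hq : 0 < q) (hy : 0 < y) :
    Real.exp (-(p*y+q/y)) / (y * Real.sqrt y) ≤ 3/(q*Real.sqrt q) * Real.exp (-(p*y)) := by
  have hqy : 0 < q / y := div_pos hq hy
  have key : q * Real.sqrt q * Real.exp (-(q/y)) ≤ 3 * (y * Real.sqrt y) := by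
    have h := aux32 hqy
    have h2 : (q/y) * Real.sqrt (q/y) * Real.exp (-(q/y)) * (y * Real.sqrt y)
        ≤ 3 * (y * Real.sqrt y) := by
      apply mul_le_mul_of_nonneg_right h (sqrt_mul_pos hy).le
    calc q * Real.sqrt q * Real.exp (-(q/y))
        = (q/y) * Real.sqrt (q/y) * Real.exp (-(q/y)) * (y * Real.sqrt y) := by
          have hsq : Real.sqrt (q/y) * Real.sqrt y = Real.sqrt q := by
            rw [← Real.sqrt_mul hqy.le, div_mul_cancel₀ _ hy.ne']
          have hq' : q / y * y = q := div_mul_cancel₀ q hy.ne'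
          rw [← hsq]
          field_simp
      _ ≤ _ := h2
  rw [div_le_iff₀ (sqrt_mul_pos hy)]
  have hexp : Real.exp (-(p*y+q/y)) = Real.exp (-(p*y)) * Real.exp (-(q/y)) := by
    rw [← Real.exp_add]; ring_nf
  rw [hexp]
  have h3 : 0 < q * Real.sqrt q := sqrt_mul_pos hq
  rw [div_mul_eq_mul_div, mul_comm (3:ℝ) (Real.exp (-(p*y)))]
  calc Real.exp (-(p*y)) * Real.exp (-(q/y))
      ≤ Real.exp (-(p*y)) * (3 * (y * Real.sqrt y) / (q * Real.sqrt q)) := by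
        apply mul_le_mul_of_nonneg_left _ (Real.exp_pos _).le
        rw [le_div_iff₀ h3]; linarith [key]
    _ = Real.exp (-(p * y)) * 3 / (q * Real.sqrt q) * (y * Real.sqrt y) := by ring
lemma bound12 {p q y : ℝ} (hq : 0 < q) (hy : 0 < y) :
    Real.exp (-(p*y+q/y)) / Real.sqrt y ≤ 2/Real.sqrt q * Real.exp (-(p*y)) := by
  have hqy : 0 < q / y := div_pos hq hy
  have hsy : 0 < Real.sqrt y := Real.sqrt_pos.2 hy
  have hsq : 0 < Real.sqrt q := Real.sqrt_pos.2 hq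
  have key : Real.sqrt q * Real.exp (-(q/y)) ≤ 2 * Real.sqrt y := by
    have h := aux12 hqy
    have h2 := mul_le_mul_of_nonneg_right h hsy.le
    calc Real.sqrt q * Real.exp (-(q/y))
        = Real.sqrt (q/y) * Real.exp (-(q/y)) * Real.sqrt y := by
          rw [mul_right_comm, ← Real.sqrt_mul hqy.le y, div_mul_cancel₀ _ hy.ne']
      _ ≤ _ := h2
  rw [div_le_iff₀ hsy]
  have hexp : Real.exp (-(p*y+q/y)) = Real.exp (-(p*y)) * Real.exp (-(q/y)) := by
    rw [← Real.exp_add]; ring_nf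
  rw [hexp]
  calc Real.exp (-(p*y)) * Real.exp (-(q/y))
      ≤ Real.exp (-(p*y)) * (2 * Real.sqrt y / Real.sqrt q) := by
        apply mul_le_mul_of_nonneg_left _ (Real.exp_pos _).le
        rw [le_div_iff₀ hsq]; linarith [key]
    _ = 2 / Real.sqrt q * Real.exp (-(p * y)) * Real.sqrt y := by ring

lemma contOn_core {p q : ℝ} : ContinuousOn (fun y : ℝ => Real.exp (-(p*y+q/y))) (Ioi 0) := by
  apply ContinuousOn.comp Real.continuous_exp.continuousOn
  · exact (((continuousOn_const.mul continuousOn_id).add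
      (continuousOn_const.div continuousOn_id (fun y hy => ne_of_gt hy))).neg)
  · exact Set.mapsTo_univ _ _

lemma integrableOn_I {p q : ℝ} (hp : 0 < p) (hq : 0 < q) :
    IntegrableOn (fun y => Real.exp (-(p*y+q/y)) / (y * Real.sqrt y)) (Ioi 0) := by
  have hg : IntegrableOn (fun y => 3/(q*Real.sqrt q) * Real.exp (-(p*y))) (Ioi 0) := by
    simpa [neg_mul, IntegrableOn] using (exp_neg_integrableOn_Ioi 0 hp).const_mul (3/(q*Real.sqrt q))
  refine Integrable.mono hg ?_ ?_
  · apply ContinuousOn.aestronglyMeasurable _ measurableSet_Ioi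
    exact contOn_core.div (continuousOn_id.mul (Real.continuous_sqrt.continuousOn))
      (fun y hy => (sqrt_mul_pos hy).ne')
  · filter_upwards [ae_restrict_mem measurableSet_Ioi] with y hy
    rw [Real.norm_of_nonneg (div_nonneg (Real.exp_pos _).le (sqrt_mul_pos hy).le),
      Real.norm_of_nonneg (by positivity)]
    exact bound32 hq hy

lemma integrableOn_J {p q : ℝ} (hp : 0 < p) (hq : 0 < q) :
    IntegrableOn (fun y => Real.exp (-(p*y+q/y)) / Real.sqrt y) (Ioi 0) := by
  have hg : IntegrableOn (fun y => 2/Real.sqrt q * Real.exp (-(p*y))) (Ioi 0) := by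
    simpa [neg_mul, IntegrableOn] using (exp_neg_integrableOn_Ioi 0 hp).const_mul (2/Real.sqrt q)
  refine Integrable.mono hg ?_ ?_
  · apply ContinuousOn.aestronglyMeasurable _ measurableSet_Ioi
    exact contOn_core.div Real.continuous_sqrt.continuousOn
      (fun y hy => (Real.sqrt_pos.2 hy).ne')
  · filter_upwards [ae_restrict_mem measurableSet_Ioi] with y hy
    rw [Real.norm_of_nonneg (div_nonneg (Real.exp_pos _).le (Real.sqrt_nonneg _)),
      Real.norm_of_nonneg (by positivity)]
    exact bound12 hq hy

-- the substitution map
noncomputable def phi (p q y : ℝ) : ℝ := Real.sqrt p * Real.sqrt y - Real.sqrt q / Real.sqrt y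

lemma phi_deriv {p q y : ℝ} (hy : 0 < y) :
    HasDerivAt (phi p q) (Real.sqrt p / (2*Real.sqrt y) + Real.sqrt q / (2*(y*Real.sqrt y))) y := by
  have hsy : 0 < Real.sqrt y := Real.sqrt_pos.2 hy
  have h1 : HasDerivAt Real.sqrt (1/(2*Real.sqrt y)) y := Real.hasDerivAt_sqrt hy.ne'
  have h2 : HasDerivAt (fun y => Real.sqrt p * Real.sqrt y) (Real.sqrt p * (1/(2*Real.sqrt y))) y :=
    h1.const_mul _
  have h3 : HasDerivAt (fun y => Real.sqrt q / Real.sqrt y)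
      (-(Real.sqrt q * (1/(2*Real.sqrt y))) / (Real.sqrt y)^2) y := by
    simpa using (hasDerivAt_const y (Real.sqrt q)).fun_div h1 hsy.ne'
  have := h2.sub h3
  refine (this.congr_deriv ?_ : HasDerivAt (phi p q) _ y)
  rw [Real.sq_sqrt hy.le]
  field_simp
  ring

lemma phi_injOn {p q : ℝ} (hp : 0 < p) (hq : 0 < q) : InjOn (phi p q) (Ioi 0) := by
  have : StrictMonoOn (phi p q) (Ioi 0) := by
    intro y1 h1 y2 h2 h12
    have hs : Real.sqrt y1 < Real.sqrt y2 := Real.sqrt_lt_sqrt (le_of_lt h1) h12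
    have hs1 : 0 < Real.sqrt y1 := Real.sqrt_pos.2 h1
    have hsp : 0 < Real.sqrt p := Real.sqrt_pos.2 hp
    have hsq : 0 < Real.sqrt q := Real.sqrt_pos.2 hq
    have : Real.sqrt q / Real.sqrt y2 < Real.sqrt q / Real.sqrt y1 :=
      div_lt_div_of_pos_left hsq hs1 hs
    unfold phi
    nlinarith
  exact this.injOn

lemma phi_surj {p q : ℝ} (hp : 0 < p) (hq : 0 < q) : phi p q '' (Ioi 0) = univ := by
  apply eq_univ_of_forall
  intro u
  set sp := Real.sqrt p with hsp
  set sq := Real.sqrt q with hsq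
  have hsp0 : 0 < sp := Real.sqrt_pos.2 hp
  have hsq0 : 0 < sq := Real.sqrt_pos.2 hq
  set D := u^2 + 4*(sp*sq) with hD
  have hD0 : 0 ≤ D := by positivity
  have hDu : |u| < Real.sqrt D := by
    rw [← Real.sqrt_sq_eq_abs]
    apply Real.sqrt_lt_sqrt (sq_nonneg u)
    nlinarith
  set t := (u + Real.sqrt D) / (2*sp) with ht
  have ht0 : 0 < t := by
    apply div_pos _ (by positivity)
    have := abs_le.1 hDu.le
    nlinarith [hDu, abs_nonneg u, neg_abs_le u]
  have hkey : sp * t^2 - u * t = sq := by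
    have h1 : 2*sp*t - u = Real.sqrt D := by rw [ht]; field_simp; ring
    have h2 : (Real.sqrt D)^2 = D := Real.sq_sqrt hD0
    rw [← h1] at h2
    rw [hD] at h2
    nlinarith [h2, hsp0]
  refine ⟨t^2, mem_Ioi.2 (by positivity), ?_⟩
  unfold phi
  rw [← hsp, ← hsq, Real.sqrt_sq ht0.le]
  field_simp
  linear_combination hkey

lemma phi_sq {p q y : ℝ} (hp : 0 < p) (hq : 0 < q) (hy : 0 < y) :
    (phi p q y)^2 = p*y + q/y - 2*Real.sqrt (p*q) := by
  unfold phi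
  have e1 : (Real.sqrt p * Real.sqrt y)^2 = p * y := by
    rw [mul_pow, Real.sq_sqrt hp.le, Real.sq_sqrt hy.le]
  have e2 : (Real.sqrt q / Real.sqrt y)^2 = q / y := by
    rw [div_pow, Real.sq_sqrt hq.le, Real.sq_sqrt hy.le]
  have e3 : Real.sqrt p * Real.sqrt y * (Real.sqrt q / Real.sqrt y) = Real.sqrt (p*q) := by
    rw [Real.sqrt_mul hp.le]
    field_simp [(Real.sqrt_pos.2 hy).ne']
  nlinarith [e1, e2, e3]

lemma K_val {p q : ℝ} (hp : 0 < p) (hq : 0 < q) :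
    ∫ y in Ioi (0:ℝ), (Real.sqrt p / (2*Real.sqrt y) + Real.sqrt q / (2*(y*Real.sqrt y))) *
      Real.exp (-(p*y+q/y)) = Real.sqrt π * Real.exp (-(2*Real.sqrt (p*q))) := by
  have himg := phi_surj hp hq (p := p) (q := q)
  have hsub := integral_image_eq_integral_abs_deriv_smul measurableSet_Ioi
    (f := phi p q) (f' := fun y => Real.sqrt p / (2*Real.sqrt y) + Real.sqrt q / (2*(y*Real.sqrt y)))
    (fun y hy => (phi_deriv (mem_Ioi.1 hy)).hasDerivWithinAt)
    (phi_injOn hp hq) (fun u => Real.exp (-u^2))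
  rw [himg] at hsub
  have hL : ∫ u in (univ : Set ℝ), Real.exp (-u^2) = Real.sqrt π := by
    rw [Measure.restrict_univ]
    simpa using integral_gaussian 1
  rw [hL] at hsub
  have hR : ∫ y in Ioi (0:ℝ),
      |Real.sqrt p / (2*Real.sqrt y) + Real.sqrt q / (2*(y*Real.sqrt y))| • Real.exp (-(phi p q y)^2)
      = Real.exp (2*Real.sqrt (p*q)) * ∫ y in Ioi (0:ℝ),
        (Real.sqrt p / (2*Real.sqrt y) + Real.sqrt q / (2*(y*Real.sqrt y))) * Real.exp (-(p*y+q/y)) := by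
    rw [← integral_const_mul]
    apply setIntegral_congr_fun measurableSet_Ioi
    intro y hy
    have hy' : (0:ℝ) < y := mem_Ioi.1 hy
    dsimp only
    have hsy : 0 < Real.sqrt y := Real.sqrt_pos.2 hy'
    rw [abs_of_nonneg (by positivity), smul_eq_mul, phi_sq hp hq hy']
    rw [show -(p*y + q/y - 2*Real.sqrt (p*q)) = 2*Real.sqrt (p*q) + -(p*y+q/y) by ring,
      Real.exp_add]
    ring
  rw [hR] at hsub
  have he : Real.exp (2*Real.sqrt (p*q)) ≠ 0 := (Real.exp_pos _).ne'
  rw [Real.exp_neg, eq_mul_inv_iff_mul_eq₀ he, mul_comm, ← hsub]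

lemma J_eq {p q : ℝ} (hp : 0 < p) (hq : 0 < q) :
    ∫ y in Ioi (0:ℝ), Real.exp (-(p*y+q/y)) / Real.sqrt y
      = Real.sqrt q / Real.sqrt p * ∫ y in Ioi (0:ℝ), Real.exp (-(p*y+q/y)) / (y * Real.sqrt y) := by
  have himg : (fun y : ℝ => q/(p*y)) '' Ioi 0 = Ioi 0 := by
    ext z
    constructor
    · rintro ⟨y, hy, rfl⟩
      exact mem_Ioi.2 (div_pos hq (mul_pos hp (mem_Ioi.1 hy)))
    · intro hz
      refine ⟨q/(p*z), mem_Ioi.2 (div_pos hq (mul_pos hp (mem_Ioi.1 hz))), ?_⟩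
      field_simp
  have hderiv : ∀ y ∈ Ioi (0:ℝ), HasDerivWithinAt (fun y : ℝ => q/(p*y)) (-(q/(p*y^2))) (Ioi 0) y := by
    intro y hy
    have hy' := mem_Ioi.1 hy
    have h := ((hasDerivAt_const y q).div ((hasDerivAt_id y).const_mul p)
      (by positivity : (p*y) ≠ 0))
    apply HasDerivAt.hasDerivWithinAt
    refine (h.congr_deriv ?_ : HasDerivAt (fun y : ℝ => q/(p*y)) _ y)
    simp only [id]
    field_simp
    ring
  have hinj : InjOn (fun y : ℝ => q/(p*y)) (Ioi 0) := by
    intro y1 h1 y2 h2 he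
    have h1' := mem_Ioi.1 h1
    have h2' := mem_Ioi.1 h2
    field_simp at he
    exact he.symm
  have hsub := integral_image_eq_integral_abs_deriv_smul measurableSet_Ioi hderiv hinj
    (fun y => Real.exp (-(p*y+q/y)) / Real.sqrt y)
  rw [himg] at hsub
  rw [hsub, ← integral_const_mul]
  apply setIntegral_congr_fun measurableSet_Ioi
  intro y hy
  have hy' : (0:ℝ) < y := mem_Ioi.1 hy
  have hsy : 0 < Real.sqrt y := Real.sqrt_pos.2 hy'
  have hsp : 0 < Real.sqrt p := Real.sqrt_pos.2 hp
  have hsq : 0 < Real.sqrt q := Real.sqrt_pos.2 hq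
  dsimp only
  have harg : p*(q/(p*y)) + q/(q/(p*y)) = p*y + q/y := by
    field_simp
    ring
  rw [harg, abs_of_nonpos (neg_nonpos.2 (by positivity : (0:ℝ) ≤ q/(p*y^2))), neg_neg, smul_eq_mul]
  have hsqrt : Real.sqrt (q/(p*y)) = Real.sqrt q / (Real.sqrt p * Real.sqrt y) := by
    rw [Real.sqrt_div hq.le, Real.sqrt_mul hp.le]
  rw [hsqrt]
  have ep : Real.sqrt p * Real.sqrt p = p := Real.mul_self_sqrt hp.le
  have eq' : Real.sqrt q * Real.sqrt q = q := Real.mul_self_sqrt hq.le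
  have ey : Real.sqrt y * Real.sqrt y = y := Real.mul_self_sqrt hy'.le
  field_simp
  ring_nf
  linear_combination (q*Real.sqrt y*Real.sqrt y)*ep + (q*p)*ey - (p*y)*eq'

lemma I_val {p q : ℝ} (hp : 0 < p) (hq : 0 < q) :
    ∫ y in Ioi (0:ℝ), Real.exp (-(p*y+q/y)) / (y * Real.sqrt y)
      = Real.sqrt π / Real.sqrt q * Real.exp (-(2*Real.sqrt (p*q))) := by
  have hsp : 0 < Real.sqrt p := Real.sqrt_pos.2 hp
  have hsq : 0 < Real.sqrt q := Real.sqrt_pos.2 hq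
  have hK := K_val hp hq
  have h1 : ∫ y in Ioi (0:ℝ), (Real.sqrt p / (2*Real.sqrt y) + Real.sqrt q / (2*(y*Real.sqrt y))) *
      Real.exp (-(p*y+q/y))
      = Real.sqrt p/2 * (∫ y in Ioi (0:ℝ), Real.exp (-(p*y+q/y)) / Real.sqrt y)
        + Real.sqrt q/2 * (∫ y in Ioi (0:ℝ), Real.exp (-(p*y+q/y)) / (y*Real.sqrt y)) := by
    have hadd := integral_add ((integrableOn_J hp hq).const_mul (Real.sqrt p/2))
      ((integrableOn_I hp hq).const_mul (Real.sqrt q/2))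
    rw [integral_const_mul, integral_const_mul] at hadd
    rw [← hadd]
    apply setIntegral_congr_fun measurableSet_Ioi
    intro y hy
    dsimp only
    ring
  rw [h1, J_eq hp hq] at hK
  have h2 : Real.sqrt q * (∫ y in Ioi (0:ℝ), Real.exp (-(p*y+q/y)) / (y*Real.sqrt y))
      = Real.sqrt π * Real.exp (-(2*Real.sqrt (p*q))) := by
    have e : Real.sqrt p / 2 * (Real.sqrt q / Real.sqrt p *
        (∫ y in Ioi (0:ℝ), Real.exp (-(p*y+q/y)) / (y*Real.sqrt y)))
        = Real.sqrt q / 2 * (∫ y in Ioi (0:ℝ), Real.exp (-(p*y+q/y)) / (y*Real.sqrt y)) := by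
      field_simp
    rw [e] at hK
    linarith [hK]
  rw [div_mul_eq_mul_div, eq_div_iff hsq.ne']
  linear_combination h2

lemma gauss_integrable {s : ℝ} (hs : 0 < s) (m : ℝ) :
    Integrable (fun x : ℝ => Real.exp (-(s*(x+m)^2))) := by
  have := (integrable_exp_neg_mul_sq hs).comp_add_right m
  simpa [neg_mul] using this

lemma gauss_shift {s : ℝ} (hs : 0 < s) (m : ℝ) :
    ∫ x : ℝ, Real.exp (-(s*(x+m)^2)) = Real.sqrt (π/s) := by
  have h := integral_add_right_eq_self (μ := volume) (fun x : ℝ => Real.exp (-(s*x^2))) m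
  calc ∫ x : ℝ, Real.exp (-(s*(x+m)^2)) = ∫ x : ℝ, Real.exp (-s*x^2) := by
        rw [h]; congr 1; ext x; rw [neg_mul]
    _ = Real.sqrt (π/s) := integral_gaussian s

section Core
variable {a b c : ℝ}

lemma core_integral (ha : 0 < a) (hd : 0 < a*c - b^2) :
    ∫ z in {w : ℝ × ℝ | 0 < w.2},
        Real.exp (-(a*(z.1^2+z.2^2)+2*b*z.1+c)/z.2) / z.2^2
      = π / Real.sqrt (a*c-b^2) * Real.exp (-(2*Real.sqrt (a*c-b^2))) := by
  set d : ℝ := (a*c-b^2)/a with hd'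
  have hd0 : 0 < d := div_pos hd ha
  set f : ℝ × ℝ → ℝ := fun z => Real.exp (-(a*(z.1^2+z.2^2)+2*b*z.1+c)/z.2) / z.2^2 with hf
  -- factorization
  have hfac : ∀ y : ℝ, 0 < y → ∀ x : ℝ,
      f (x, y) = Real.exp (-(a*y + d/y)) / y^2 * Real.exp (-((a/y)*(x+b/a)^2)) := by
    intro y hy x
    have harg : -(a*(x^2+y^2)+2*b*x+c)/y = (-(a*y + d/y)) + (-((a/y)*(x+b/a)^2)) := by
      rw [hd']
      field_simp
      ring
    simp only [hf]
    rw [harg, Real.exp_add]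
    ring
  have hset : {w : ℝ × ℝ | 0 < w.2} = (univ : Set ℝ) ×ˢ Ioi (0:ℝ) := by
    ext w; simp [Set.mem_prod]
  have hmeas : Measurable f := by
    apply Measurable.div
    · apply Real.measurable_exp.comp
      fun_prop
    · fun_prop
  -- inner integral value
  have hinner : ∀ y : ℝ, 0 < y → ∫ x : ℝ, f (x, y)
      = Real.sqrt π / Real.sqrt a * (Real.exp (-(a*y + d/y)) / (y * Real.sqrt y)) := by
    intro y hy
    have h1 : (fun x : ℝ => f (x, y))
        = fun x => Real.exp (-(a*y + d/y)) / y^2 * Real.exp (-((a/y)*(x+b/a)^2)) := by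
      ext x; exact hfac y hy x
    rw [h1, integral_const_mul, gauss_shift (div_pos ha hy) (b/a)]
    have hsy : 0 < Real.sqrt y := Real.sqrt_pos.2 hy
    have hsa : 0 < Real.sqrt a := Real.sqrt_pos.2 ha
    have h2 : Real.sqrt (π/(a/y)) = Real.sqrt π * Real.sqrt y / Real.sqrt a := by
      rw [div_div_eq_mul_div, Real.sqrt_div (by positivity : (0:ℝ) ≤ π*y),
        Real.sqrt_mul pi_nonneg]
    rw [h2]
    have ey := Real.mul_self_sqrt hy.le
    have hsy' : Real.sqrt y ≠ 0 := hsy.ne'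
    have key : ∀ E : ℝ, E/y^2*(Real.sqrt π*Real.sqrt y/Real.sqrt a)
        = Real.sqrt π/Real.sqrt a*(E/(y*Real.sqrt y)) := by
      intro E
      field_simp
      ring_nf
      linear_combination E * ey
    exact key _
  -- measure rewriting
  rw [hset]
  have hμ : (volume : Measure (ℝ×ℝ)).restrict ((univ : Set ℝ) ×ˢ Ioi (0:ℝ))
      = (volume : Measure ℝ).prod ((volume : Measure ℝ).restrict (Ioi 0)) := by
    rw [Measure.volume_eq_prod, ← Measure.prod_restrict, Measure.restrict_univ]
  rw [hμ]
  -- integrability on the product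
  have hInt : Integrable f ((volume : Measure ℝ).prod ((volume : Measure ℝ).restrict (Ioi 0))) := by
    rw [integrable_prod_iff' hmeas.aestronglyMeasurable]
    constructor
    · filter_upwards [ae_restrict_mem measurableSet_Ioi] with y hy
      have h1 : (fun x : ℝ => f (x, y))
          = fun x => Real.exp (-(a*y + d/y)) / y^2 * Real.exp (-((a/y)*(x+b/a)^2)) := by
        ext x; exact hfac y hy x
      rw [h1]
      exact (gauss_integrable (div_pos ha hy) (b/a)).const_mul _
    · apply Integrable.congr (((integrableOn_I ha hd0).const_mul
        (Real.sqrt π / Real.sqrt a)) : Integrable _ _)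
      filter_upwards [ae_restrict_mem measurableSet_Ioi] with y hy
      have hn : ∀ x : ℝ, ‖f (x, y)‖ = f (x, y) := by
        intro x
        apply Real.norm_of_nonneg
        simp only [hf]
        positivity
      simp only [hn]
      exact (hinner y hy).symm
  rw [integral_prod_symm f hInt]
  rw [setIntegral_congr_fun measurableSet_Ioi (fun y hy => hinner y (mem_Ioi.1 hy)),
    integral_const_mul, I_val ha hd0]
  have had : a * d = a*c - b^2 := by rw [hd']; field_simp
  rw [had]
  calc Real.sqrt π / Real.sqrt a * (Real.sqrt π / Real.sqrt d * Real.exp (-(2*Real.sqrt (a*c-b^2))))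
      = (Real.sqrt π * Real.sqrt π)/(Real.sqrt a * Real.sqrt d) * Real.exp (-(2*Real.sqrt (a*c-b^2))) := by
        ring
    _ = π / Real.sqrt (a*c-b^2) * Real.exp (-(2*Real.sqrt (a*c-b^2))) := by
        rw [Real.mul_self_sqrt pi_nonneg, ← Real.sqrt_mul ha.le, had]
end Core


lemma posDef_smul {M : Matrix (Fin 2) (Fin 2) ℝ} (hM : M.PosDef) {c : ℝ} (hc : 0 < c) :
    (c • M).PosDef := by
  refine Matrix.PosDef.of_dotProduct_mulVec_pos ?_ (fun x hx => ?_)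
  · unfold Matrix.IsHermitian
    rw [conjTranspose_smul, hM.1.eq]
    norm_num
  · have h := hM.dotProduct_mulVec_pos hx
    have : star x ⬝ᵥ (c • M).mulVec x = c * (star x ⬝ᵥ M.mulVec x) := by
      rw [smul_mulVec, dotProduct_smul, smul_eq_mul]
    rw [this]
    exact mul_pos hc h

lemma posDef00 {M : Matrix (Fin 2) (Fin 2) ℝ} (hM : M.PosDef) : 0 < M 0 0 := by
  have h := hM.dotProduct_mulVec_pos (x := ![1, 0]) (by
    intro h
    have := congrFun h 0
    simp at this)
  simpa [Matrix.mulVec, dotProduct, Fin.sum_univ_two] using h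

lemma sym01 {M : Matrix (Fin 2) (Fin 2) ℝ} (hM : M.PosDef) : M 1 0 = M 0 1 := by
  have := hM.1.apply 0 1
  simpa using this

lemma det2 {M : Matrix (Fin 2) (Fin 2) ℝ} (hM : M.PosDef) :
    M.det = M 0 0 * M 1 1 - (M 0 1)^2 := by
  rw [Matrix.det_fin_two, sym01 hM]
  ring

/-- closed form of the α-Bhattacharyya divergence between two
Poincaré distributions, for α ∈ (0,1). -/
theorem bhattacharyya_poincare (α : ℝ) (hα : α ∈ Set.Ioo (0 : ℝ) 1)
    (θ θ' : Matrix (Fin 2) (Fin 2) ℝ) (hθ : θ.PosDef) (hθ' : θ'.PosDef) :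
    -Real.log (∫ z in {w : ℝ × ℝ | 0 < w.2},
        poincareDensity θ z ^ α * poincareDensity θ' z ^ (1 - α)) =
      1 / 2 * Real.log ((α • θ + (1 - α) • θ').det / (θ.det ^ α * θ'.det ^ (1 - α))) +
        2 * (Real.sqrt (α • θ + (1 - α) • θ').det -
          (α * Real.sqrt θ.det + (1 - α) * Real.sqrt θ'.det)) := by
  obtain ⟨hα0, hα1⟩ := hα
  have hβ : 0 < 1 - α := by linarith
  set m := α • θ + (1 - α) • θ' with hm
  have hmpd : m.PosDef := (posDef_smul hθ hα0).add (posDef_smul hθ' hβ)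
  have hdθ : 0 < θ.det := hθ.det_pos
  have hdθ' : 0 < θ'.det := hθ'.det_pos
  have hdm : 0 < m.det := hmpd.det_pos
  have hm00 : m 0 0 = α * θ 0 0 + (1-α) * θ' 0 0 := by simp [hm]
  have hm01 : m 0 1 = α * θ 0 1 + (1-α) * θ' 0 1 := by simp [hm]
  have hm11 : m 1 1 = α * θ 1 1 + (1-α) * θ' 1 1 := by simp [hm]
  have ha00 : 0 < m 0 0 := posDef00 hmpd
  have hdm2 : 0 < m 0 0 * m 1 1 - (m 0 1)^2 := by rw [← det2 hmpd]; exact hdm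
  have hs1 : 0 < Real.sqrt θ.det := Real.sqrt_pos.2 hdθ
  have hs2 : 0 < Real.sqrt θ'.det := Real.sqrt_pos.2 hdθ'
  have hsm : 0 < Real.sqrt m.det := Real.sqrt_pos.2 hdm
  set C1 : ℝ := Real.sqrt θ.det * Real.exp (2 * Real.sqrt θ.det) / π with hC1
  set C2 : ℝ := Real.sqrt θ'.det * Real.exp (2 * Real.sqrt θ'.det) / π with hC2
  have hC1p : 0 < C1 := by rw [hC1]; positivity
  have hC2p : 0 < C2 := by rw [hC2]; positivity
  -- pointwise identity on the upper half plane
  have hptwise : ∀ z : ℝ × ℝ, z ∈ {w : ℝ × ℝ | 0 < w.2} →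
      poincareDensity θ z ^ α * poincareDensity θ' z ^ (1-α)
        = (C1 ^ α * C2 ^ (1-α)) *
          (Real.exp (-(m 0 0*(z.1^2+z.2^2)+2*(m 0 1)*z.1+m 1 1)/z.2) / z.2^2) := by
    intro z hz
    have hy : (0:ℝ) < z.2 := hz
    have hy2 : (0:ℝ) < z.2^2 := by positivity
    simp only [poincareDensity, if_pos hy, ← hC1, ← hC2]
    rw [Real.div_rpow (by positivity) (by positivity),
      Real.div_rpow (by positivity) (by positivity),
      Real.mul_rpow hC1p.le (Real.exp_pos _).le,
      Real.mul_rpow hC2p.le (Real.exp_pos _).le,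
      ← Real.exp_mul, ← Real.exp_mul]
    have hyy : (z.2^2)^α * (z.2^2)^(1-α) = z.2^2 := by
      rw [← Real.rpow_add hy2]
      norm_num
    have harg : (-(θ 0 0 * (z.1 ^ 2 + z.2 ^ 2) + 2 * θ 0 1 * z.1 + θ 1 1)/z.2)*α
        + (-(θ' 0 0 * (z.1 ^ 2 + z.2 ^ 2) + 2 * θ' 0 1 * z.1 + θ' 1 1)/z.2)*(1-α)
        = -(m 0 0*(z.1^2+z.2^2)+2*(m 0 1)*z.1+m 1 1)/z.2 := by
      rw [hm00, hm01, hm11]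
      field_simp
      ring
    calc C1 ^ α * Real.exp (-(θ 0 0 * (z.1 ^ 2 + z.2 ^ 2) + 2 * θ 0 1 * z.1 + θ 1 1)/z.2*α) / (z.2^2)^α
          * (C2 ^ (1-α) * Real.exp (-(θ' 0 0 * (z.1 ^ 2 + z.2 ^ 2) + 2 * θ' 0 1 * z.1 + θ' 1 1)/z.2*(1-α)) / (z.2^2)^(1-α))
        = (C1 ^ α * C2 ^ (1-α)) *
            (Real.exp (-(θ 0 0 * (z.1 ^ 2 + z.2 ^ 2) + 2 * θ 0 1 * z.1 + θ 1 1)/z.2*α)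
              * Real.exp (-(θ' 0 0 * (z.1 ^ 2 + z.2 ^ 2) + 2 * θ' 0 1 * z.1 + θ' 1 1)/z.2*(1-α)))
            / ((z.2^2)^α * (z.2^2)^(1-α)) := by ring
      _ = (C1 ^ α * C2 ^ (1-α)) *
            (Real.exp (-(m 0 0*(z.1^2+z.2^2)+2*(m 0 1)*z.1+m 1 1)/z.2) / z.2^2) := by
            rw [← Real.exp_add, harg, hyy, mul_div_assoc]
  -- evaluate the integral
  have hmeasS : MeasurableSet {w : ℝ × ℝ | 0 < w.2} :=
    (isOpen_lt continuous_const continuous_snd).measurableSet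
  have hint : (∫ z in {w : ℝ × ℝ | 0 < w.2},
      poincareDensity θ z ^ α * poincareDensity θ' z ^ (1-α))
      = (C1 ^ α * C2 ^ (1-α)) * (π / Real.sqrt m.det * Real.exp (-(2*Real.sqrt m.det))) := by
    rw [setIntegral_congr_fun hmeasS hptwise, integral_const_mul,
      core_integral ha00 hdm2, ← det2 hmpd]
  rw [hint]
  -- logarithm computation
  have l1 : Real.log (C1 ^ α) = α * (Real.log θ.det/2 + 2*Real.sqrt θ.det - Real.log π) := by
    rw [Real.log_rpow hC1p, hC1, Real.log_div (by positivity) Real.pi_ne_zero,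
      Real.log_mul hs1.ne' (Real.exp_pos _).ne', Real.log_exp, Real.log_sqrt hdθ.le]
  have l2 : Real.log (C2 ^ (1-α)) = (1-α) * (Real.log θ'.det/2 + 2*Real.sqrt θ'.det - Real.log π) := by
    rw [Real.log_rpow hC2p, hC2, Real.log_div (by positivity) Real.pi_ne_zero,
      Real.log_mul hs2.ne' (Real.exp_pos _).ne', Real.log_exp, Real.log_sqrt hdθ'.le]
  have l3 : Real.log (π / Real.sqrt m.det * Real.exp (-(2*Real.sqrt m.det)))
      = Real.log π - Real.log m.det/2 - 2*Real.sqrt m.det := by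
    rw [Real.log_mul (by positivity) (Real.exp_pos _).ne', Real.log_exp,
      Real.log_div Real.pi_ne_zero hsm.ne', Real.log_sqrt hdm.le]
    ring
  rw [Real.log_mul (by positivity) (by positivity),
    Real.log_mul (by positivity) (by positivity), l1, l2, l3,
    Real.log_div hdm.ne' (by positivity),
    Real.log_mul (by positivity) (by positivity),
    Real.log_rpow hdθ, Real.log_rpow hdθ']
  ring

end Aux
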